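/- Let Φ : ℝ^d → ℝ and Ψ : ℝ^s → ℝ be even functions that are conditionally positive definite of order 1. Let x_1,…,x_n ∈ ℝ^d be pairwise distinct, y_1,…,y_n ∈ ℝ^s be pairwise distinct, and define A, B ∈ ℝ^{n×n} by A_{ij} = Φ(x_i − x_j) and B_{ij} = Ψ(y_i − y_j). Then for every nonzero matrix V ∈ ℝ^{n×n} with V𝟙 = 0 and Vᵀ𝟙 = 0 one has tr(B Vᵀ A V) > 0; that is, the Hessian −(B⊗A) of the energy E₂(X) = −tr(B Xᵀ A X) is negative definite on lin(DS). -/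

import Mathlib

open Matrix

/-- A function `Φ : ℝ^d → ℝ` is conditionally positive definite of order 1 if for every finite
collection of pairwise distinct points `x_1, …, x_n` and every nonzero vector `η` with
`∑ i, η i = 0`, one has `∑ i j, η i * η j * Φ (x i - x j) > 0`. -/
def CondPosDefOrder1 {d : ℕ} (Φ : (Fin d → ℝ) → ℝ) : Prop :=
  ∀ (n : ℕ) (x : Fin n → (Fin d → ℝ)), Function.Injective x →
    ∀ η : Fin n → ℝ, η ≠ 0 → (∑ i, η i) = 0 →
      0 < ∑ i, ∑ j, η i * η j * Φ (x i - x j)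

/-- If `Φ, Ψ` are even, conditionally positive definite functions of order 1, and
`A i j = Φ (x i - x j)`, `B i j = Ψ (y i - y j)` for pairwise distinct points `x i` and
pairwise distinct points `y i`, then for every nonzero `V` with `V𝟙 = 0` and `Vᵀ𝟙 = 0` one has
`tr (B Vᵀ A V) > 0`; i.e. the Hessian `-(B ⊗ A)` of `E₂(X) = -tr (B Xᵀ A X)` is negative
definite on `lin(DS)`. -/
lemma tilde_posDef {d n : ℕ} (hn : (n:ℝ) ≠ 0) (Φ : (Fin d → ℝ) → ℝ)
    (hΦeven : ∀ v, Φ (-v) = Φ v) (hΦ : CondPosDefOrder1 Φ)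
    (x : Fin n → (Fin d → ℝ)) (hx : Function.Injective x)
    (A : Matrix (Fin n) (Fin n) ℝ) (hA : ∀ i j, A i j = Φ (x i - x j)) :
    (((1 : Matrix (Fin n) (Fin n) ℝ) - (n:ℝ)⁻¹ • Matrix.of (fun _ _ => (1:ℝ))) * A *
      ((1 : Matrix (Fin n) (Fin n) ℝ) - (n:ℝ)⁻¹ • Matrix.of (fun _ _ => (1:ℝ)))
      + Matrix.of (fun _ _ => (1:ℝ))).PosDef := by
  set J : Matrix (Fin n) (Fin n) ℝ := Matrix.of (fun _ _ => (1:ℝ)) with hJ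
  set P : Matrix (Fin n) (Fin n) ℝ := 1 - (n:ℝ)⁻¹ • J with hP
  have hAsymm : Aᵀ = A := by
    ext i j
    simp only [transpose_apply, hA]
    rw [← hΦeven, neg_sub]
  have hJsymm : Jᵀ = J := by ext i j; rfl
  have hPsymm : Pᵀ = P := by
    rw [hP, transpose_sub, transpose_one, transpose_smul, hJsymm]
  have hJmulVec : ∀ η : Fin n → ℝ, J *ᵥ η = fun _ => ∑ k, η k := by
    intro η; ext i; simp [mulVec, dotProduct, hJ]
  have hPmulVec : ∀ η : Fin n → ℝ, P *ᵥ η = fun i => η i - (n:ℝ)⁻¹ * ∑ k, η k := by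
    intro η; ext i
    rw [hP, sub_mulVec, smul_mulVec, hJmulVec]
    simp [one_mulVec]
  refine Matrix.PosDef.of_dotProduct_mulVec_pos ?_ ?_
  · show _ = _
    rw [conjTranspose_add, conjTranspose_mul, conjTranspose_mul]
    have h1 : ∀ M : Matrix (Fin n) (Fin n) ℝ, Mᴴ = Mᵀ := fun M => rfl
    rw [h1, h1, h1, hPsymm, hAsymm, hJsymm, Matrix.mul_assoc, ← Matrix.mul_assoc]
  · intro η hη
    have hstar : star η = η := by simp
    rw [hstar]
    set η' : Fin n → ℝ := fun i => η i - (n:ℝ)⁻¹ * ∑ k, η k with hη'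
    have hsum' : ∑ i, η' i = 0 := by
      simp only [hη', Finset.sum_sub_distrib, Finset.sum_const, Finset.card_univ,
        Fintype.card_fin, nsmul_eq_mul]
      field_simp
      ring
    have hquad : dotProduct η ((P * A * P + J) *ᵥ η)
        = dotProduct η' (A *ᵥ η') + (∑ k, η k) * (∑ k, η k) := by
      rw [add_mulVec, dotProduct_add]
      congr 1
      · rw [← Matrix.mulVec_mulVec, ← Matrix.mulVec_mulVec, dotProduct_mulVec η,
          ← mulVec_transpose, hPsymm, hPmulVec]
      · rw [hJmulVec]
        simp [dotProduct, ← Finset.sum_mul]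
    rw [hquad]
    have hAform : dotProduct η' (A *ᵥ η') = ∑ i, ∑ j, η' i * η' j * Φ (x i - x j) := by
      simp only [dotProduct, mulVec, hA, Finset.mul_sum]
      exact Finset.sum_congr rfl fun i _ => Finset.sum_congr rfl fun j _ => by ring
    by_cases hcase : η' = 0
    · have hsz : (∑ k, η k) ≠ 0 := by
        intro h0
        apply hη
        funext i
        have := congrFun hcase i
        simpa [hη', h0] using this
      rw [hcase]
      simp only [mulVec_zero, dotProduct_zero, zero_add]
      exact mul_self_pos.mpr hsz
    · have h1 := hΦ n x hx η' hcase hsum'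
      rw [hAform]
      nlinarith [sq_nonneg (∑ k, η k), h1]

theorem conditionally_concave_of_condPosDef
    {d s n : ℕ} (Φ : (Fin d → ℝ) → ℝ) (Ψ : (Fin s → ℝ) → ℝ)
    (hΦeven : ∀ v, Φ (-v) = Φ v) (hΨeven : ∀ v, Ψ (-v) = Ψ v)
    (hΦ : CondPosDefOrder1 Φ) (hΨ : CondPosDefOrder1 Ψ)
    (x : Fin n → (Fin d → ℝ)) (hx : Function.Injective x)
    (y : Fin n → (Fin s → ℝ)) (hy : Function.Injective y)
    (A B : Matrix (Fin n) (Fin n) ℝ)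
    (hA : ∀ i j, A i j = Φ (x i - x j)) (hB : ∀ i j, B i j = Ψ (y i - y j))
    (V : Matrix (Fin n) (Fin n) ℝ) (hV : V ≠ 0)
    (hV1 : V *ᵥ (fun _ => 1) = 0) (hV2 : Vᵀ *ᵥ (fun _ => 1) = 0) :
    0 < (B * Vᵀ * A * V).trace := by
  rcases eq_or_ne n 0 with rfl | hn0
  · exact absurd (by ext i j; exact i.elim0) hV
  have hn : (n:ℝ) ≠ 0 := Nat.cast_ne_zero.mpr hn0
  set J : Matrix (Fin n) (Fin n) ℝ := Matrix.of (fun _ _ => (1:ℝ)) with hJ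
  set P : Matrix (Fin n) (Fin n) ℝ := 1 - (n:ℝ)⁻¹ • J with hP
  -- products with J vanish
  have hcol : ∀ j, ∑ k, V k j = 0 := by
    intro j
    have := congrFun hV2 j
    simpa [mulVec, dotProduct] using this
  have hrow : ∀ i, ∑ k, V i k = 0 := by
    intro i
    have := congrFun hV1 i
    simpa [mulVec, dotProduct] using this
  have hJV : J * V = 0 := by
    ext i j; simp [mul_apply, hJ, hcol j]
  have hVJ : V * J = 0 := by
    ext i j; simp [mul_apply, hJ, hrow i]
  have hJVt : J * Vᵀ = 0 := by
    ext i j; simp [mul_apply, hJ, hrow j]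
  have hVtJ : Vᵀ * J = 0 := by
    ext i j; simp [mul_apply, hJ, hcol i]
  have hPV : P * V = V := by
    rw [hP, Matrix.sub_mul, Matrix.one_mul, Matrix.smul_mul, hJV, smul_zero, sub_zero]
  have hVP : V * P = V := by
    rw [hP, Matrix.mul_sub, Matrix.mul_one, Matrix.mul_smul, hVJ, smul_zero, sub_zero]
  have hPVt : P * Vᵀ = Vᵀ := by
    rw [hP, Matrix.sub_mul, Matrix.one_mul, Matrix.smul_mul, hJVt, smul_zero, sub_zero]
  have hVtP : Vᵀ * P = Vᵀ := by
    rw [hP, Matrix.mul_sub, Matrix.mul_one, Matrix.mul_smul, hVtJ, smul_zero, sub_zero]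
  set At : Matrix (Fin n) (Fin n) ℝ := P * A * P + J with hAt
  set Bt : Matrix (Fin n) (Fin n) ℝ := P * B * P + J with hBt
  have hAtPD : At.PosDef := tilde_posDef hn Φ hΦeven hΦ x hx A hA
  have hBtPD : Bt.PosDef := tilde_posDef hn Ψ hΨeven hΨ y hy B hB
  -- reduce to the tilde matrices
  have e1 : At * V = P * (A * V) := by
    rw [hAt, Matrix.add_mul, hJV, add_zero, Matrix.mul_assoc, hPV, Matrix.mul_assoc]
  have e2 : Vᵀ * (At * V) = Vᵀ * (A * V) := by
    rw [e1, ← Matrix.mul_assoc, hVtP]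
  have e3 : Bt * (Vᵀ * (A * V)) = P * (B * (Vᵀ * (A * V))) := by
    rw [hBt, Matrix.add_mul, ← Matrix.mul_assoc J Vᵀ _, hJVt, Matrix.zero_mul, add_zero,
      Matrix.mul_assoc (P * B) P _, ← Matrix.mul_assoc P Vᵀ _, hPVt, Matrix.mul_assoc]
  have etr : (Bt * (Vᵀ * (At * V))).trace = (B * Vᵀ * A * V).trace := by
    rw [e2, e3, Matrix.trace_mul_comm P _, Matrix.mul_assoc B _ P,
      Matrix.mul_assoc Vᵀ _ P, Matrix.mul_assoc A V P, hVP]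
    simp only [Matrix.mul_assoc]
  rw [← etr]
  -- square root of At
  obtain ⟨C, hCC, hCsymm⟩ : ∃ C : Matrix (Fin n) (Fin n) ℝ, C * C = At ∧ Cᵀ = C := by
    open scoped MatrixOrder in
    exact ⟨CFC.sqrt At, CFC.sqrt_mul_sqrt_self At hAtPD.posSemidef.nonneg,
      (CFC.sqrt_nonneg At).posSemidef.isHermitian⟩
  set W : Matrix (Fin n) (Fin n) ℝ := C * V with hW
  have hWW : Vᵀ * (At * V) = Wᵀ * W := by
    rw [hW, Matrix.transpose_mul, hCsymm, Matrix.mul_assoc Vᵀ C (C * V),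
      ← Matrix.mul_assoc C C V, hCC]
  have hWne : W ≠ 0 := by
    intro h0
    apply hV
    have hAtV : At * V = 0 := by
      rw [← hCC, Matrix.mul_assoc, ← hW, h0, Matrix.mul_zero]
    have hdet : IsUnit At.det := isUnit_iff_ne_zero.mpr (ne_of_gt hAtPD.det_pos)
    calc V = At⁻¹ * (At * V) := by rw [← Matrix.mul_assoc, Matrix.nonsing_inv_mul At hdet, Matrix.one_mul]
    _ = 0 := by rw [hAtV, Matrix.mul_zero]
  rw [hWW]
  -- positivity of trace
  have hdiag : ∀ k, (W * Bt * Wᵀ) k k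
      = dotProduct (star (fun i => W k i)) (Bt *ᵥ (fun i => W k i)) := by
    intro k
    simp only [star_trivial, mul_apply, mulVec, dotProduct, transpose_apply,
      Finset.sum_mul, Finset.mul_sum]
    rw [Finset.sum_comm]
    exact Finset.sum_congr rfl fun i _ => Finset.sum_congr rfl fun j _ => by ring
  have htr : (Bt * (Wᵀ * W)).trace = ∑ k, (W * Bt * Wᵀ) k k := by
    rw [← Matrix.mul_assoc, Matrix.trace_mul_cycle Bt Wᵀ W]
    rfl
  rw [htr]
  obtain ⟨k0, hk0⟩ : ∃ k, (fun i => W k i) ≠ 0 := by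
    by_contra h
    push_neg at h
    apply hWne
    ext i j
    exact congrFun (h i) j
  refine Finset.sum_pos' (fun k _ => ?_) ⟨k0, Finset.mem_univ k0, ?_⟩
  · rw [hdiag k]
    exact hBtPD.posSemidef.dotProduct_mulVec_nonneg _
  · rw [hdiag k0]
    exact hBtPD.dotProduct_mulVec_pos hk0
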